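/- Let S be a finite type, P : S → S → ℝ a matrix, R an ordinary lumping for P, and i₁, i₂ ∈ S with (i₁,i₂) ∈ R. Then for every k ∈ ℕ and every R-equivalence class H, Σ_{t∈H} (P^k)(i₁,t) = Σ_{t∈H} (P^k)(i₂,t), where P^k denotes the k-th matrix power. (Transient part of Proposition 8.1: the transient probability mass functions started in related states have equal sums over every equivalence class.) -/
import Mathlib

/-- The sum of `f` over the set of states `H`. -/
noncomputable def classSum {S : Type*} [Fintype S] (H : Set S) (f : S → ℝ) : ℝ :=
  ∑ s, H.indicator f s

/-- `H` is an equivalence class of the relation `R`. -/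
def IsClass {S : Type*} (R : S → S → Prop) (H : Set S) : Prop :=
  ∃ s, H = {t | R s t}

/-- `R` is an ordinary lumping for the matrix `P`. -/
def IsLumping {S : Type*} [Fintype S] (P : S → S → ℝ) (R : S → S → Prop) : Prop :=
  Equivalence R ∧
    ∀ s₁ s₂, R s₁ s₂ → ∀ H : Set S, IsClass R H →
      classSum H (P s₁) = classSum H (P s₂)

open Classical in
lemma classSum_eq_filter {S : Type*} [Fintype S] (H : Set S) (f : S → ℝ) :
    classSum H f = ∑ t ∈ Finset.univ.filter (· ∈ H), f t := by
  classical
  unfold classSum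
  rw [Finset.sum_filter]
  exact Finset.sum_congr rfl fun t _ => Set.indicator_apply H f t

/-- Transient part of Proposition 8.1: if `(i₁, i₂)` belongs to an ordinary
lumping `R` for `P`, then for every `k` the `k`-step transient PMFs started in
`i₁` and in `i₂` have equal sums over every `R`-equivalence class. -/
theorem lumping_transient_class_sums {S : Type*} [Fintype S] [DecidableEq S]
    (P : Matrix S S ℝ) (R : S → S → Prop)
    (hR : IsLumping (fun s t => P s t) R)
    (i₁ i₂ : S) (h : R i₁ i₂) :
    ∀ k : ℕ, ∀ H : Set S, IsClass R H →
      classSum H (fun t => (P ^ k) i₁ t) = classSum H (fun t => (P ^ k) i₂ t) := by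
  classical
  obtain ⟨hEq, hL⟩ := hR
  suffices key : ∀ k : ℕ, ∀ a b : S, R a b → ∀ H : Set S, IsClass R H →
      classSum H (fun t => (P ^ k) a t) = classSum H (fun t => (P ^ k) b t) by
    exact fun k => key k i₁ i₂ h
  intro k
  induction k with
  | zero =>
    intro a b hab H hH
    obtain ⟨s, rfl⟩ := hH
    have hmem : a ∈ {t | R s t} ↔ b ∈ {t | R s t} := by
      constructor
      · exact fun ha => hEq.trans ha hab
      · exact fun hb => hEq.trans hb (hEq.symm hab)
    rw [classSum_eq_filter, classSum_eq_filter]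
    simp only [pow_zero, Matrix.one_apply]
    rw [Finset.sum_ite_eq, Finset.sum_ite_eq]
    simp only [Finset.mem_filter, Finset.mem_univ, true_and]
    by_cases ha : a ∈ {t | R s t}
    · rw [if_pos ha, if_pos (hmem.mp ha)]
    · rw [if_neg ha, if_neg (fun hb => ha (hmem.mpr hb))]
  | succ k ih =>
    intro a b hab H hH
    -- expand one step
    have hpow : ∀ i : S, classSum H (fun t => (P ^ (k + 1)) i t)
        = ∑ j, P i j * classSum H (fun t => (P ^ k) j t) := by
      intro i
      rw [classSum_eq_filter]
      simp only [pow_succ', Matrix.mul_apply]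
      rw [Finset.sum_comm]
      refine Finset.sum_congr rfl fun j _ => ?_
      rw [classSum_eq_filter, Finset.mul_sum]
    rw [hpow, hpow]
    set st : Setoid S := ⟨R, hEq⟩ with hst
    have hfib : ∀ i : S, ∑ j, P i j * classSum H (fun t => (P ^ k) j t)
        = ∑ q : Quotient st, (∑ j ∈ Finset.univ.filter (fun j => Quotient.mk st j = q), P i j)
            * classSum H (fun t => (P ^ k) q.out t) := by
      intro i
      rw [← Finset.sum_fiberwise (g := fun j => Quotient.mk st j)
        (f := fun j => P i j * classSum H (fun t => (P ^ k) j t))]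
      refine Finset.sum_congr rfl fun q _ => ?_
      rw [Finset.sum_mul]
      refine Finset.sum_congr rfl fun j hj => ?_
      have hjq : Quotient.mk st j = q := (Finset.mem_filter.mp hj).2
      have hRj : R j q.out := by
        have : Quotient.mk st j = Quotient.mk st q.out := by rw [hjq, Quotient.out_eq]
        exact Quotient.exact this
      rw [ih j q.out hRj H hH]
    rw [hfib, hfib]
    refine Finset.sum_congr rfl fun q _ => ?_
    congr 1
    have hclass : IsClass R {t | R q.out t} := ⟨q.out, rfl⟩
    have := hL a b hab {t | R q.out t} hclass
    rw [classSum_eq_filter, classSum_eq_filter] at this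
    have hset : ∀ j : S, (Quotient.mk st j = q) ↔ j ∈ {t | R q.out t} := by
      intro j
      constructor
      · intro hj
        exact Quotient.exact
          (by rw [hj, Quotient.out_eq] : Quotient.mk st q.out = Quotient.mk st j)
      · intro hj
        rw [← Quotient.out_eq q]
        exact Quotient.sound (hEq.symm hj)
    have hfil : Finset.univ.filter (fun j => Quotient.mk st j = q)
        = Finset.univ.filter (· ∈ {t | R q.out t}) := by
      ext j; simp [hset j]
    rw [hfil]
    exact this
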